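/- Let σ : ℝ → ℝ be twice continuously differentiable. Then σ satisfies −2·σ(t)·σ''(t) + σ'(t)² + 1/4 = 0 for all t ∈ ℝ if and only if there exist real numbers A ≠ 0 and D such that σ(t) = A·(t + D)² + 1/(16·A) for all t ∈ ℝ. -/

import Mathlib

/-- A twice continuously differentiable `σ : ℝ → ℝ` satisfies
`−2σσ'' + (σ')² + 1/4 = 0` on `ℝ` iff `σ(t) = A(t + D)² + 1/(16A)` for some `A ≠ 0`, `D`. -/
theorem ode_iff_quadratic_form (σ : ℝ → ℝ) (hσ : ContDiff ℝ 2 σ) :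
    (∀ t : ℝ, -2 * σ t * deriv (deriv σ) t + (deriv σ t) ^ 2 + 1 / 4 = 0) ↔
      ∃ A D : ℝ, A ≠ 0 ∧ ∀ t : ℝ, σ t = A * (t + D) ^ 2 + 1 / (16 * A) := by
  have hσ' : ContDiff ℝ (1 + 1) σ := by norm_num [hσ]
  have hd1 : Differentiable ℝ σ := hσ.differentiable (by norm_num)
  have hcd1 : ContDiff ℝ 1 (deriv σ) := (contDiff_succ_iff_deriv.mp hσ').2.2
  have hd2 : Differentiable ℝ (deriv σ) := hcd1.differentiable one_ne_zero
  constructor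
  · intro heq
    -- σ never vanishes
    have hσ0 : ∀ t, σ t ≠ 0 := by
      intro t h0
      have := heq t
      rw [h0] at this
      nlinarith [sq_nonneg (deriv σ t)]
    -- the energy function
    set h : ℝ → ℝ := fun t => ((deriv σ t) ^ 2 + 1 / 4) / σ t with hdef
    have hh : ∀ t, HasDerivAt h 0 t := by
      intro t
      have h1 : HasDerivAt (deriv σ) (deriv (deriv σ) t) t := (hd2 t).hasDerivAt
      have h2 : HasDerivAt (fun t => (deriv σ t) ^ 2 + 1 / 4)
          (2 * deriv σ t ^ 1 * deriv (deriv σ) t) t := (h1.pow 2).add_const _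
      have h3 : HasDerivAt σ (deriv σ t) t := (hd1 t).hasDerivAt
      have h4 := h2.div h3 (hσ0 t)
      have e : (2 * deriv σ t ^ 1 * deriv (deriv σ) t * σ t -
          ((deriv σ t) ^ 2 + 1 / 4) * deriv σ t) / σ t ^ 2 = 0 := by
        have := heq t
        have : (deriv σ t) ^ 2 + 1 / 4 = 2 * σ t * deriv (deriv σ) t := by linarith
        rw [this]; ring
      rwa [e] at h4
    have hconst : ∀ t, h t = h 0 := by
      intro t
      exact is_const_of_deriv_eq_zero (fun x => (hh x).differentiableAt)
        (fun x => (hh x).deriv) t 0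
    set c : ℝ := h 0 with hc
    have hkey : ∀ t, (deriv σ t) ^ 2 + 1 / 4 = c * σ t := by
      intro t
      have := hconst t
      rw [show h t = ((deriv σ t) ^ 2 + 1 / 4) / σ t from rfl, div_eq_iff (hσ0 t)] at this
      linarith [this]
    have hc0 : c ≠ 0 := by
      intro h0
      have := hkey 0
      rw [h0] at this
      nlinarith [sq_nonneg (deriv σ 0)]
    -- σ'' = c/2
    have hsecond : ∀ t, deriv (deriv σ) t = c / 2 := by
      intro t
      have h1 := heq t
      have h2 := hkey t
      have h3 := hσ0 t
      have h4 : σ t * (2 * deriv (deriv σ) t - c) = 0 := by nlinarith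
      have h5 := (mul_eq_zero.mp h4).resolve_left h3
      linarith
    set B : ℝ := deriv σ 0 with hB
    -- σ' t = (c/2) t + B
    have hfirst : ∀ t, deriv σ t = c / 2 * t + B := by
      intro t
      have hG : ∀ x, HasDerivAt (fun t => deriv σ t - (c / 2 * t + B)) 0 x := by
        intro x
        have h1 : HasDerivAt (deriv σ) (deriv (deriv σ) x) x := (hd2 x).hasDerivAt
        have h2 : HasDerivAt (fun t : ℝ => c / 2 * t + B) (c / 2) x := by
          simpa using ((hasDerivAt_id x).const_mul (c / 2)).add_const B
        have := h1.sub h2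
        rw [hsecond x, sub_self] at this
        exact this
      have := is_const_of_deriv_eq_zero (fun x => (hG x).differentiableAt)
        (fun x => (hG x).deriv) t 0
      simp at this
      linarith [this]
    -- σ t = (c/4) t² + B t + σ 0
    have hform : ∀ t, σ t = c / 4 * t ^ 2 + B * t + σ 0 := by
      intro t
      have hF : ∀ x, HasDerivAt (fun t => σ t - (c / 4 * t ^ 2 + B * t + σ 0)) 0 x := by
        intro x
        have h1 : HasDerivAt σ (deriv σ x) x := (hd1 x).hasDerivAt
        have h2 : HasDerivAt (fun t : ℝ => c / 4 * t ^ 2 + B * t + σ 0)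
            (c / 4 * (2 * x) + B) x := by
          have := ((((hasDerivAt_id x).pow 2).const_mul (c / 4)).add
            ((hasDerivAt_id x).const_mul B)).add_const (σ 0)
          simpa using this
        have := h1.sub h2
        rw [hfirst x] at this
        have e : c / 2 * x + B - (c / 4 * (2 * x) + B) = 0 := by ring
        rwa [e] at this
      have := is_const_of_deriv_eq_zero (fun x => (hF x).differentiableAt)
        (fun x => (hF x).deriv) t 0
      simp at this
      linarith [this]
    have hc4 : c / 4 ≠ 0 := div_ne_zero hc0 (by norm_num)
    refine ⟨c / 4, B / (2 * (c / 4)), hc4, fun t => ?_⟩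
    have hC : B ^ 2 + 1 / 4 = c * σ 0 := by simpa [hB] using hkey 0
    rw [hform t]
    field_simp
    nlinarith [hC]
  · rintro ⟨A, D, hA, hform⟩
    have hfun : σ = fun t => A * (t + D) ^ 2 + 1 / (16 * A) := funext hform
    have hder1 : deriv σ = fun t => 2 * A * (t + D) := by
      funext t
      rw [hfun]
      have : HasDerivAt (fun t : ℝ => A * (t + D) ^ 2 + 1 / (16 * A))
          (2 * A * (t + D)) t := by
        have := (((hasDerivAt_id t).add_const D).pow 2).const_mul A
        have := this.add_const (1 / (16 * A))
        refine this.congr_deriv ?_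
        simp only [id_eq]
        ring
      exact this.deriv
    have hder2 : ∀ t, deriv (deriv σ) t = 2 * A := by
      intro t
      rw [hder1]
      have : HasDerivAt (fun t : ℝ => 2 * A * (t + D)) (2 * A) t := by
        simpa using ((hasDerivAt_id t).add_const D).const_mul (2 * A)
      exact this.deriv
    intro t
    rw [hder2 t, hder1, hform t]
    field_simp
    ring
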